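/- The F_q(t)-algebra F_{q^d}(τ) := F_{q^d}{τ} ⊗_{F_q[t]} F_q(t), where t = τ^d is central, is a central division algebra of dimension d² over F_q(t). -/

import Mathlib

open scoped TensorProduct

set_option maxHeartbeats 1000000
set_option synthInstance.maxHeartbeats 400000
set_option linter.unusedSectionVars false



/-- A characterization of the skew polynomial ring `K{τ}` (for `K = F_{q^d}`) with commutation
rule `τ·λ = λ^q·τ`: a ring `R` together with coefficient maps `c n : R →+ K` such that elements
are uniquely determined by their (finitely supported) coefficients, every finitely supported
family of coefficients occurs, `1` and `τ` have the expected coefficients, and multiplication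
is the twisted convolution `c_n(x·y) = Σ_{i=0}^n c_i(x)·c_{n-i}(y)^{q^i}` (which encodes
`τλ = λ^q τ`). -/
structure IsSkewPolyRing (q : ℕ) (K : Type) [Field K] (R : Type) [Ring R]
    (c : ℕ → R →+ K) (τ : R) : Prop where
  inj : Function.Injective fun (x : R) (n : ℕ) => c n x
  support_finite : ∀ x : R, (Function.support fun n => c n x).Finite
  surj : ∀ f : ℕ →₀ K, ∃ x : R, ∀ n, c n x = f n
  coeff_one : ∀ n, c n (1 : R) = if n = 0 then 1 else 0
  coeff_tau : ∀ n, c n τ = if n = 1 then 1 else 0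
  coeff_mul : ∀ x y : R, ∀ n,
    c n (x * y) = ∑ i ∈ Finset.range (n + 1), c i x * c (n - i) y ^ q ^ i

namespace IsSkewPolyRing

variable {q : ℕ} {K : Type} [Field K] {R : Type} [Ring R]
  {c : ℕ → R →+ K} {τ : R} (h : IsSkewPolyRing q K R c τ)

variable (hq0 : q ≠ 0)

include h hq0

lemma ext {x y : R} (H : ∀ n, c n x = c n y) : x = y :=
  h.inj (funext H)

lemma coeff_tau_pow (k : ℕ) : ∀ n, c n (τ ^ k) = if n = k then 1 else 0 := by
  induction k with
  | zero => simpa using h.coeff_one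
  | succ k ih =>
    intro n
    rw [pow_succ, h.coeff_mul]
    rcases lt_or_ge n k with hk | hk
    · rw [Finset.sum_eq_zero, if_neg (by omega)]
      intro i hi
      rw [ih i, if_neg (by simp at hi; omega), zero_mul]
    · rw [Finset.sum_eq_single k]
      · rw [ih, if_pos rfl, one_mul, h.coeff_tau]
        by_cases hnk : n = k + 1
        · simp [hnk]
        · rw [if_neg hnk, if_neg (by omega), zero_pow (pow_ne_zero _ hq0)]
      · intro i hi hik
        rw [ih i, if_neg hik, zero_mul]
      · intro hn
        simp at hn; omega

variable {ι : K →+* R} (hι : ∀ (a : K) (n : ℕ), c n (ι a) = if n = 0 then a else 0)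

include hι

lemma coeff_iota_mul_tau_pow (a : K) (k : ℕ) (n : ℕ) :
    c n (ι a * τ ^ k) = if n = k then a else 0 := by
  rw [h.coeff_mul]
  rw [Finset.sum_eq_single 0]
  · rw [hι, if_pos rfl, h.coeff_tau_pow hq0, pow_zero, pow_one, Nat.sub_zero]
    by_cases hnk : n = k <;> simp [hnk]
  · intro i hi hi0
    rw [hι, if_neg hi0, zero_mul]
  · simp

lemma tau_pow_mul_iota (a : K) (k : ℕ) :
    τ ^ k * ι a = ι (a ^ q ^ k) * τ ^ k := by
  refine h.ext hq0 fun n => ?_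
  rw [h.coeff_iota_mul_tau_pow hq0 hι, h.coeff_mul]
  rcases lt_or_ge n k with hlt | hle
  · rw [if_neg (by omega), Finset.sum_eq_zero]
    intro i hi
    simp only [Finset.mem_range] at hi
    rw [h.coeff_tau_pow hq0, if_neg (by omega), zero_mul]
  · rw [Finset.sum_eq_single k]
    · rw [h.coeff_tau_pow hq0, if_pos rfl, one_mul, hι]
      by_cases hnk : n = k
      · subst hnk; simp
      · rw [if_neg (by omega), zero_pow (pow_ne_zero _ hq0), if_neg hnk]
    · intro i hi hik
      rw [h.coeff_tau_pow hq0, if_neg hik, zero_mul]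
    · intro hk; simp at hk; omega

lemma eq_sum_support (x : R) :
    x = ∑ n ∈ (h.support_finite x).toFinset, ι ((c n) x) * τ ^ n := by
  refine h.ext hq0 ?_
  intro m
  rw [map_sum]
  rw [Finset.sum_eq_single m]
  · rw [h.coeff_iota_mul_tau_pow hq0 hι, if_pos rfl]
  · intro n _ hnm
    rw [h.coeff_iota_mul_tau_pow hq0 hι, if_neg (Ne.symm hnm)]
  · intro hm
    rw [h.coeff_iota_mul_tau_pow hq0 hι, if_pos rfl]
    simpa using hm

omit hι

lemma coeff_zero (n : ℕ) : c n (0 : R) = 0 := map_zero _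

lemma exists_coeff_ne_zero {x : R} (hx : x ≠ 0) : ∃ n, c n x ≠ 0 := by
  by_contra hc
  push_neg at hc
  exact hx (h.ext hq0 fun n => by rw [hc n, map_zero])

lemma mul_ne_zero {x y : R} (hx : x ≠ 0) (hy : y ≠ 0) : x * y ≠ 0 := by
  obtain ⟨nx, hnx⟩ := h.exists_coeff_ne_zero hq0 hx
  obtain ⟨ny, hny⟩ := h.exists_coeff_ne_zero hq0 hy
  -- take maximal elements of supports
  set sx := (h.support_finite x).toFinset with hsx
  set sy := (h.support_finite y).toFinset with hsy
  have hsxne : sx.Nonempty := ⟨nx, by simp [hsx, Function.mem_support, hnx]⟩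
  have hsyne : sy.Nonempty := ⟨ny, by simp [hsy, Function.mem_support, hny]⟩
  set a := sx.max' hsxne with ha
  set b := sy.max' hsyne with hb
  have hca : c a x ≠ 0 := by
    have := sx.max'_mem hsxne
    simpa [hsx, Function.mem_support] using this
  have hcb : c b y ≠ 0 := by
    have := sy.max'_mem hsyne
    simpa [hsy, Function.mem_support] using this
  have hax : ∀ m, a < m → c m x = 0 := by
    intro m hm
    by_contra hc
    exact absurd (sx.le_max' m (by simp [hsx, Function.mem_support, hc])) (by omega)
  have hby : ∀ m, b < m → c m y = 0 := by
    intro m hm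
    by_contra hc
    exact absurd (sy.le_max' m (by simp [hsy, Function.mem_support, hc])) (by omega)
  intro hxy
  have : c (a + b) (x * y) = c a x * c b y ^ q ^ a := by
    rw [h.coeff_mul]
    rw [Finset.sum_eq_single a]
    · rw [Nat.add_sub_cancel_left]
    · intro i hi hia
      simp only [Finset.mem_range] at hi
      rcases lt_or_ge a i with hlt | hle
      · rw [hax _ hlt, zero_mul]
      · rw [hby _ (by omega), zero_pow (pow_ne_zero _ hq0), mul_zero]
    · intro hb'; simp at hb'
  rw [hxy, map_zero] at this
  exact (Classical.em _).elim (fun hh => hca hh) fun _ =>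
    hca (by
      have := this.symm
      rcases mul_eq_zero.mp this with h1 | h2
      · exact h1
      · exact absurd (pow_eq_zero_iff (pow_ne_zero _ hq0) |>.mp h2) hcb)

end IsSkewPolyRing

section Main

variable {Fq K R : Type} [Field Fq] [Fintype Fq] [Field K] [Fintype K] [Algebra Fq K] [Ring R]
  {q d : ℕ} (hq : q = Fintype.card Fq) (hd : 0 < d) (hK : Fintype.card K = q ^ d)
  {c : ℕ → R →+ K} {τ : R} (h : IsSkewPolyRing q K R c τ)
  {ι : K →+* R} (hι : ∀ (a : K) (n : ℕ), c n (ι a) = if n = 0 then a else 0)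
  [Algebra (Polynomial Fq) R]
  (halg : ∀ p : Polynomial Fq,
      algebraMap (Polynomial Fq) R p =
        p.sum fun n a => ι (algebraMap Fq K a) * τ ^ (d * n))

include hq in
lemma one_lt_q : 1 < q := hq ▸ Fintype.one_lt_card

include hq hd hK

lemma pow_q_pow_d_mul (a : K) (m : ℕ) : a ^ q ^ (d * m) = a := by
  have : q ^ (d * m) = Fintype.card K ^ m := by rw [hK, pow_mul]
  rw [this]
  exact FiniteField.pow_card_pow m a

include h hι halg

lemma algMap_monomial (m : ℕ) (b : Fq) :
    algebraMap (Polynomial Fq) R (Polynomial.monomial m b) =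
      ι (algebraMap Fq K b) * τ ^ (d * m) := by
  rw [halg, Polynomial.sum_monomial_index]
  simp

lemma coeff_monomial_smul (m : ℕ) (b : Fq) (a : K) (j : ℕ) (n : ℕ) :
    c n ((Polynomial.monomial m b) • (ι a * τ ^ j)) =
      if n = d * m + j then algebraMap Fq K b * a else 0 := by
  have hq0' : q ≠ 0 := by have := one_lt_q hq (Fq := Fq); omega
  rw [Algebra.smul_def, algMap_monomial hq hd hK h hι halg]
  have comm : τ ^ (d * m) * ι a = ι a * τ ^ (d * m) := by
    rw [h.tau_pow_mul_iota hq0' hι, pow_q_pow_d_mul hq hd hK]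
  calc c n (ι (algebraMap Fq K b) * τ ^ (d * m) * (ι a * τ ^ j))
      = c n (ι (algebraMap Fq K b * a) * τ ^ (d * m + j)) := by
        rw [map_mul ι, pow_add]
        rw [mul_assoc (ι (algebraMap Fq K b)), ← mul_assoc (τ ^ (d*m)), comm,
          mul_assoc, ← mul_assoc (ι (algebraMap Fq K b))]
    _ = _ := h.coeff_iota_mul_tau_pow hq0' hι _ _ _

lemma coeff_poly_smul (p : Polynomial Fq) (a : K) (j : ℕ) (hj : j < d) (n : ℕ) :
    c n (p • (ι a * τ ^ j)) =
      if n % d = j then algebraMap Fq K (p.coeff (n / d)) * a else 0 := by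
  conv_lhs => rw [← Polynomial.sum_monomial_eq p]
  rw [Polynomial.sum, Finset.sum_smul, map_sum]
  have hterm : ∀ m' ∈ p.support,
      c n ((Polynomial.monomial m' (p.coeff m')) • (ι a * τ ^ j)) =
        if m' = n / d ∧ n % d = j then algebraMap Fq K (p.coeff m') * a else 0 := by
    intro m' _
    rw [coeff_monomial_smul hq hd hK h hι halg]
    have hiff : (n = d * m' + j) ↔ (m' = n / d ∧ n % d = j) := by
      constructor
      · rintro rfl
        rw [Nat.add_comm]
        constructor
        · rw [Nat.add_mul_div_left _ _ hd, Nat.div_eq_of_lt hj, zero_add]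
        · rw [Nat.add_mul_mod_self_left, Nat.mod_eq_of_lt hj]
      · rintro ⟨rfl, rfl⟩
        exact (Nat.div_add_mod n d).symm
    rw [if_congr hiff rfl rfl]
  rw [Finset.sum_congr rfl hterm]
  by_cases hmod : n % d = j
  · rw [if_pos hmod]
    have hsimp : ∀ m' ∈ p.support,
        (if m' = n / d ∧ n % d = j then algebraMap Fq K (p.coeff m') * a else 0) =
          if m' = n / d then algebraMap Fq K (p.coeff m') * a else 0 := by
      intro m' _; simp [hmod]
    rw [Finset.sum_congr rfl hsimp, Finset.sum_ite_eq' p.support]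
    by_cases hmem : n / d ∈ p.support
    · rw [if_pos hmem]
    · rw [if_neg hmem, Polynomial.notMem_support_iff.mp hmem, map_zero, zero_mul]
  · rw [if_neg hmod, Finset.sum_eq_zero]
    intro m' _
    rw [if_neg (by tauto)]


open Finset in
lemma exists_basisR : Nonempty (Module.Basis (Fin d × Fin d) (Polynomial Fq) R) := by
  classical
  have hq0' : q ≠ 0 := by have := one_lt_q hq (Fq := Fq); omega
  have hfr : Module.finrank Fq K = d := by
    have hcard : Fintype.card K = Fintype.card Fq ^ Module.finrank Fq K := Module.card_eq_pow_finrank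
    rw [hK, hq] at hcard
    exact (Nat.pow_right_injective Fintype.one_lt_card hcard).symm
  set B : Module.Basis (Fin d) Fq K := (Module.finBasis Fq K).reindex (finCongr hfr) with hB
  set e : Fin d × Fin d → R := fun ij => ι (B ij.1) * τ ^ (ij.2 : ℕ) with he
  have hli : LinearIndependent (Polynomial Fq) e := by
    rw [Fintype.linearIndependent_iff]
    intro g hg ij
    obtain ⟨i₀, j₀⟩ := ij
    refine Polynomial.ext fun m => ?_
    have hc := congrArg (c (d * m + (j₀ : ℕ))) hg
    rw [map_sum, map_zero] at hc
    have h1 : (d * m + (j₀ : ℕ)) % d = (j₀ : ℕ) := by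
      rw [Nat.add_comm, Nat.add_mul_mod_self_left, Nat.mod_eq_of_lt j₀.isLt]
    have h2 : (d * m + (j₀ : ℕ)) / d = m := by
      rw [Nat.add_comm, Nat.add_mul_div_left _ _ hd, Nat.div_eq_of_lt j₀.isLt, zero_add]
    have hterm : ∀ ij' : Fin d × Fin d,
        c (d * m + (j₀ : ℕ)) (g ij' • e ij') =
          if (j₀ : ℕ) = (ij'.2 : ℕ) then algebraMap Fq K ((g ij').coeff m) * B ij'.1 else 0 := by
      intro ij'
      rw [he]
      rw [coeff_poly_smul hq hd hK h hι halg _ _ _ ij'.2.isLt]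
      rw [h1, h2]
    rw [Finset.sum_congr rfl (fun ij' _ => hterm ij')] at hc
    rw [← Finset.univ_product_univ, Finset.sum_product_right] at hc
    have hsplit : (∑ y : Fin d, ∑ x : Fin d,
        if (j₀ : ℕ) = ((x, y).2 : ℕ) then algebraMap Fq K ((g (x, y)).coeff m) * B (x, y).1 else 0)
        = ∑ x : Fin d, algebraMap Fq K ((g (x, j₀)).coeff m) * B x := by
      rw [Finset.sum_eq_single j₀
        (fun y _ hy => Finset.sum_eq_zero fun x _ => if_neg (fun hh => hy (Fin.ext hh.symm)))
        (fun hj => absurd (Finset.mem_univ _) hj)]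
      exact Finset.sum_congr rfl fun x _ => if_pos rfl
    rw [hsplit] at hc
    have hli' := Fintype.linearIndependent_iff.mp B.linearIndependent
      (fun i => (g (i, j₀)).coeff m)
      (by rw [← hc]; exact Finset.sum_congr rfl fun i _ => Algebra.smul_def _ _)
    exact hli' i₀
  have hspan : ⊤ ≤ Submodule.span (Polynomial Fq) (Set.range e) := by
    intro x _
    rw [h.eq_sum_support hq0' hι x]
    apply Submodule.sum_mem
    intro n _
    have hsum : ∑ i : Fin d, algebraMap Fq K (B.repr (c n x) i) * B i = c n x := by
      calc ∑ i : Fin d, algebraMap Fq K (B.repr (c n x) i) * B i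
          = ∑ i : Fin d, (B.repr (c n x) i) • B i :=
            Finset.sum_congr rfl fun i _ => (Algebra.smul_def _ _).symm
        _ = c n x := B.sum_repr (c n x)
    have hydecomp : ι ((c n) x) * τ ^ n =
        ∑ i : Fin d, (Polynomial.monomial (n / d) ((B.repr (c n x)) i)) •
          e (i, ⟨n % d, Nat.mod_lt n hd⟩) := by
      refine h.ext hq0' fun m' => ?_
      rw [map_sum, h.coeff_iota_mul_tau_pow hq0' hι]
      have hterm : ∀ i : Fin d,
          c m' ((Polynomial.monomial (n / d) ((B.repr (c n x)) i)) •
            e (i, ⟨n % d, Nat.mod_lt n hd⟩)) =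
          if m' = n then algebraMap Fq K ((B.repr (c n x)) i) * B i else 0 := by
        intro i
        rw [he]
        rw [coeff_monomial_smul hq hd hK h hι halg]
        simp only []
        rw [Nat.div_add_mod n d]
      rw [Finset.sum_congr rfl (fun i _ => hterm i)]
      by_cases hm : m' = n
      · rw [if_pos hm, Finset.sum_congr rfl (fun i _ => if_pos hm)]
        exact hsum.symm
      · rw [if_neg hm, Finset.sum_congr rfl (fun i _ => if_neg hm), Finset.sum_const_zero]
    rw [hydecomp]
    exact Submodule.sum_mem _ fun i _ => Submodule.smul_mem _ _
      (Submodule.subset_span ⟨(i, ⟨n % d, Nat.mod_lt n hd⟩), rfl⟩)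
  exact ⟨Module.Basis.mk hli hspan⟩


omit h hι halg hd hK in
include hq in
lemma pow_fixed_le (S : Finset K) (m : ℕ) (hm : 1 < m) (hS : ∀ a ∈ S, a ^ m = a) :
    S.card ≤ m := by
  classical
  set P : Polynomial K := Polynomial.X ^ m - Polynomial.X with hP
  have hP0 : P ≠ 0 := FiniteField.X_pow_card_sub_X_ne_zero K hm
  have hsub : S ⊆ P.roots.toFinset := by
    intro a ha
    rw [Multiset.mem_toFinset, Polynomial.mem_roots hP0]
    simp [hP, Polynomial.IsRoot, hS a ha, sub_eq_zero]
  calc S.card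
      ≤ P.roots.toFinset.card := Finset.card_le_card hsub
    _ ≤ Multiset.card P.roots := P.roots.toFinset_card_le
    _ ≤ P.natDegree := P.card_roots'
    _ = m := FiniteField.X_pow_card_sub_X_natDegree_eq K hm

omit h hι halg in
lemma exists_not_fixed (r : ℕ) (hr : 0 < r) (hrd : r < d) : ∃ a : K, a ^ q ^ r ≠ a := by
  by_contra hc
  push_neg at hc
  have h1 : 1 < q := one_lt_q hq (Fq := Fq)
  have hle := pow_fixed_le hq (Finset.univ : Finset K) (q ^ r)
    (Nat.one_lt_pow (by omega) h1) (fun a _ => hc a)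
  rw [Finset.card_univ, hK] at hle
  have := Nat.pow_lt_pow_right h1 hrd
  omega

omit h hι halg hd hK in
include hq in
lemma fixed_mem_range (a : K) (ha : a ^ q = a) : ∃ b : Fq, algebraMap Fq K b = a := by
  classical
  have h1 : 1 < q := one_lt_q hq (Fq := Fq)
  set S := insert a (Finset.image (algebraMap Fq K) Finset.univ) with hSdef
  have hall : ∀ x ∈ S, x ^ q = x := by
    intro x hx
    rw [hSdef, Finset.mem_insert] at hx
    rcases hx with rfl | hx
    · exact ha
    · rw [Finset.mem_image] at hx
      obtain ⟨b, _, rfl⟩ := hx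
      rw [← map_pow, hq, FiniteField.pow_card]
  have hcard : S.card ≤ q := pow_fixed_le hq S q h1 hall
  have himg : (Finset.image (algebraMap Fq K) Finset.univ).card = q := by
    rw [Finset.card_image_of_injective _ (algebraMap Fq K).injective,
      Finset.card_univ, hq]
  have hmem : a ∈ Finset.image (algebraMap Fq K) Finset.univ := by
    by_contra hnot
    rw [hSdef, Finset.card_insert_of_notMem hnot, himg] at hcard
    omega
  rw [Finset.mem_image] at hmem
  obtain ⟨b, _, hb⟩ := hmem
  exact ⟨b, hb⟩

lemma central_is_poly (x : R) (hτ : x * τ = τ * x) (hcomm : ∀ a : K, x * ι a = ι a * x) :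
    ∃ p : Polynomial Fq, algebraMap (Polynomial Fq) R p = x := by
  classical
  have hq0' : q ≠ 0 := by have := one_lt_q hq (Fq := Fq); omega
  -- commuting with ι a
  have key1 : ∀ (n : ℕ) (a : K), c n x * a ^ q ^ n = a * c n x := by
    intro n a
    have e1 : c n (x * ι a) = c n x * a ^ q ^ n := by
      rw [h.coeff_mul]
      rw [Finset.sum_eq_single n]
      · rw [hι, Nat.sub_self, if_pos rfl]
      · intro i hi hin
        simp only [Finset.mem_range] at hi
        rw [hι, if_neg (by omega), zero_pow (pow_ne_zero _ hq0'), mul_zero]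
      · intro hn; simp at hn
    have e2 : c n (ι a * x) = a * c n x := by
      rw [h.coeff_mul]
      rw [Finset.sum_eq_single 0]
      · rw [hι, if_pos rfl, Nat.sub_zero, pow_zero, pow_one]
      · intro i _ hi0
        rw [hι, if_neg hi0, zero_mul]
      · intro hn; simp at hn
    rw [← e1, ← e2, hcomm]
  -- commuting with τ
  have key2 : ∀ n : ℕ, c n x ^ q = c n x := by
    intro n
    have e1 : c (n + 1) (x * τ) = c n x := by
      rw [h.coeff_mul]
      rw [Finset.sum_eq_single n]
      · simp [h.coeff_tau]
      · intro i hi hin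
        simp only [Finset.mem_range] at hi
        rw [h.coeff_tau, if_neg (by omega), zero_pow (pow_ne_zero _ hq0'), mul_zero]
      · intro hn; simp at hn
    have e2 : c (n + 1) (τ * x) = c n x ^ q := by
      rw [h.coeff_mul]
      rw [Finset.sum_eq_single 1]
      · rw [h.coeff_tau, if_pos rfl, one_mul, pow_one]
        norm_num
      · intro i _ hi1
        rw [h.coeff_tau, if_neg hi1, zero_mul]
      · intro hn; simp at hn
    rw [← e2, ← e1, hτ]
  -- coefficients vanish off multiples of d
  have key3 : ∀ n : ℕ, ¬ (d ∣ n) → c n x = 0 := by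
    intro n hdvd
    have hr0 : 0 < n % d := by
      rcases Nat.eq_zero_or_pos (n % d) with h0 | h0
      · exact absurd (Nat.dvd_of_mod_eq_zero h0) hdvd
      · exact h0
    obtain ⟨a, hane⟩ := exists_not_fixed hq hd hK (n % d) hr0 (Nat.mod_lt n hd)
    have hred : a ^ q ^ n = a ^ q ^ (n % d) := by
      conv_lhs => rw [← Nat.div_add_mod n d, pow_add, pow_mul', ← pow_mul]
      rw [pow_mul, pow_q_pow_d_mul hq hd hK]
    have := key1 n a
    rw [hred, mul_comm a (c n x)] at this
    by_contra hc0
    exact hane (mul_left_cancel₀ hc0 this)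
  -- coefficients lie in Fq
  have key4 : ∀ n : ℕ, ∃ b : Fq, algebraMap Fq K b = c n x := fun n =>
    fixed_mem_range hq (c n x) (key2 n)
  choose b hb using key4
  refine ⟨∑ n ∈ (h.support_finite x).toFinset, Polynomial.monomial (n / d) (b n), ?_⟩
  rw [map_sum]
  conv_rhs => rw [h.eq_sum_support hq0' hι x]
  refine Finset.sum_congr rfl fun n hn => ?_
  rw [algMap_monomial hq hd hK h hι halg, hb]
  have hdn : d ∣ n := by
    by_contra hc0
    have : c n x = 0 := key3 n hc0
    simp only [Set.Finite.mem_toFinset, Function.mem_support] at hn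
    exact hn this
  rw [Nat.mul_div_cancel' hdn]

end Main

/-- The `F_q(t)`-algebra `F_{q^d}(τ) := F_{q^d}{τ} ⊗_{F_q[t]} F_q(t)`, where
`t = τ^d` is central, is a central division algebra of dimension `d²` over `F_q(t)`.
The `F_q[t]`-algebra structure on the skew polynomial ring `R` is required to send a
polynomial `p` to `p(τ^d)` (with `F_q`-coefficients embedded as constants `ι`). -/
theorem skew_quotient_algebra_is_central_division_algebra
    (Fq K R : Type) [Field Fq] [Fintype Fq] [Field K] [Fintype K] [Algebra Fq K] [Ring R]
    (q d : ℕ) (hq : q = Fintype.card Fq) (hd : 0 < d) (hK : Fintype.card K = q ^ d)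
    (c : ℕ → R →+ K) (τ : R) (h : IsSkewPolyRing q K R c τ)
    (ι : K →+* R) (hι : ∀ (a : K) (n : ℕ), c n (ι a) = if n = 0 then a else 0)
    [Algebra (Polynomial Fq) R]
    (halg : ∀ p : Polynomial Fq,
      algebraMap (Polynomial Fq) R p =
        p.sum fun n a => ι (algebraMap Fq K a) * τ ^ (d * n)) :
    (∀ z : RatFunc Fq ⊗[Polynomial Fq] R, z ≠ 0 → IsUnit z) ∧
    Subring.center (RatFunc Fq ⊗[Polynomial Fq] R) =
      (algebraMap (RatFunc Fq) (RatFunc Fq ⊗[Polynomial Fq] R)).range ∧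
    Module.finrank (RatFunc Fq) (RatFunc Fq ⊗[Polynomial Fq] R) = d ^ 2 := by
  classical
  have hq0' : q ≠ 0 := by have : 1 < q := hq ▸ Fintype.one_lt_card; omega
  obtain ⟨bR⟩ := exists_basisR hq hd hK h hι halg
  let bA : Module.Basis (Fin d × Fin d) (RatFunc Fq) (RatFunc Fq ⊗[Polynomial Fq] R) :=
    bR.baseChange (RatFunc Fq)
  have hinjFq : Function.Injective (algebraMap (Polynomial Fq) (RatFunc Fq)) :=
    IsFractionRing.injective _ _
  have algne : ∀ p : Polynomial Fq, p ≠ 0 → algebraMap (Polynomial Fq) (RatFunc Fq) p ≠ 0 := by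
    intro p hp hc0
    exact hp (hinjFq (by rw [hc0, map_zero]))
  -- injectivity of r ↦ 1 ⊗ r
  have inj1 : ∀ r : R, (1 : RatFunc Fq) ⊗ₜ[Polynomial Fq] r = 0 → r = 0 := by
    intro r hr
    have hcoord : ∀ i, bR.repr r i = 0 := by
      intro i
      have h1 : bA.repr ((1 : RatFunc Fq) ⊗ₜ[Polynomial Fq] r) i
          = bR.repr r i • (1 : RatFunc Fq) := by
        simp [bA]
      rw [hr, map_zero] at h1
      have h2 : algebraMap (Polynomial Fq) (RatFunc Fq) (bR.repr r i) = 0 := by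
        rw [← mul_one (algebraMap (Polynomial Fq) (RatFunc Fq) (bR.repr r i)),
          ← Algebra.smul_def, ← h1]
        simp
      exact hinjFq (by rw [h2, map_zero])
    have : bR.repr r = 0 := Finsupp.ext fun i => hcoord i
    have := congrArg bR.repr.symm this
    rwa [bR.repr.symm_apply_apply, map_zero] at this
  have inj2 : ∀ a b : R, (1 : RatFunc Fq) ⊗ₜ[Polynomial Fq] a = 1 ⊗ₜ b → a = b := by
    intro a b hab
    have h0 : (1 : RatFunc Fq) ⊗ₜ[Polynomial Fq] (a - b) = 0 := by
      rw [TensorProduct.tmul_sub, hab, sub_self]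
    exact sub_eq_zero.mp (inj1 _ h0)
  -- scalar moving lemma
  have scal : ∀ (p : Polynomial Fq) (r : R),
      algebraMap (Polynomial Fq) (RatFunc Fq) p • ((1 : RatFunc Fq) ⊗ₜ[Polynomial Fq] r)
        = (1 : RatFunc Fq) ⊗ₜ[Polynomial Fq] (p • r) := by
    intro p r
    rw [TensorProduct.smul_tmul', smul_eq_mul, mul_one, ← TensorProduct.smul_tmul,
      Algebra.smul_def, mul_one]
  -- denominators
  have exden : ∀ z : RatFunc Fq ⊗[Polynomial Fq] R, ∃ (p : Polynomial Fq) (r : R),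
      p ≠ 0 ∧ algebraMap (Polynomial Fq) (RatFunc Fq) p • z = (1 : RatFunc Fq) ⊗ₜ[Polynomial Fq] r := by
    intro z
    induction z using TensorProduct.induction_on with
    | zero => exact ⟨1, 0, one_ne_zero, by simp⟩
    | tmul f r =>
      have hd0 : algebraMap (Polynomial Fq) (RatFunc Fq) f.denom ≠ 0 :=
        algne _ (RatFunc.denom_ne_zero f)
      have hfd : algebraMap (Polynomial Fq) (RatFunc Fq) f.denom * f
          = algebraMap (Polynomial Fq) (RatFunc Fq) f.num := by
        calc algebraMap (Polynomial Fq) (RatFunc Fq) f.denom * f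
            = f * algebraMap (Polynomial Fq) (RatFunc Fq) f.denom := mul_comm _ _
          _ = (algebraMap (Polynomial Fq) (RatFunc Fq) f.num
                / algebraMap (Polynomial Fq) (RatFunc Fq) f.denom)
              * algebraMap (Polynomial Fq) (RatFunc Fq) f.denom := by
              rw [RatFunc.num_div_denom]
          _ = _ := div_mul_cancel₀ _ hd0
      refine ⟨f.denom, f.num • r, RatFunc.denom_ne_zero f, ?_⟩
      rw [TensorProduct.smul_tmul', smul_eq_mul, hfd, ← TensorProduct.smul_tmul, Algebra.smul_def, mul_one]
    | add x y hx hy =>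
      obtain ⟨p1, r1, hp1, e1⟩ := hx
      obtain ⟨p2, r2, hp2, e2⟩ := hy
      refine ⟨p1 * p2, p2 • r1 + p1 • r2, mul_ne_zero hp1 hp2, ?_⟩
      rw [smul_add, TensorProduct.tmul_add]
      congr 1
      · rw [map_mul, mul_comm, mul_smul, e1, scal]
      · rw [map_mul, mul_smul, e2, scal]
  -- domain
  have hdom : ∀ z w : RatFunc Fq ⊗[Polynomial Fq] R, z * w = 0 → z = 0 ∨ w = 0 := by
    intro z w hzw
    by_contra hcon
    push_neg at hcon
    obtain ⟨hz, hw⟩ := hcon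
    obtain ⟨p1, r1, hp1, e1⟩ := exden z
    obtain ⟨p2, r2, hp2, e2⟩ := exden w
    have hmul : (1 : RatFunc Fq) ⊗ₜ[Polynomial Fq] (r1 * r2) = 0 := by
      calc (1 : RatFunc Fq) ⊗ₜ[Polynomial Fq] (r1 * r2)
          = ((1 : RatFunc Fq) ⊗ₜ[Polynomial Fq] r1) * ((1 : RatFunc Fq) ⊗ₜ[Polynomial Fq] r2) := by
            rw [Algebra.TensorProduct.tmul_mul_tmul, one_mul]
        _ = (algebraMap (Polynomial Fq) (RatFunc Fq) p1 • z)
            * (algebraMap (Polynomial Fq) (RatFunc Fq) p2 • w) := by rw [e1, e2]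
        _ = algebraMap (Polynomial Fq) (RatFunc Fq) p1
            • (algebraMap (Polynomial Fq) (RatFunc Fq) p2 • (z * w)) := by
            rw [smul_mul_assoc, mul_smul_comm]
        _ = 0 := by rw [hzw, smul_zero, smul_zero]
    have hr120 : r1 * r2 = 0 := inj1 _ hmul
    have hr1 : r1 ≠ 0 := by
      intro h0
      rw [h0, TensorProduct.tmul_zero] at e1
      exact hz ((smul_eq_zero_iff_eq (Units.mk0 _ (algne _ hp1))).mp e1)
    have hr2 : r2 ≠ 0 := by
      intro h0
      rw [h0, TensorProduct.tmul_zero] at e2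
      exact hw ((smul_eq_zero_iff_eq (Units.mk0 _ (algne _ hp2))).mp e2)
    exact h.mul_ne_zero hq0' hr1 hr2 hr120
  haveI : FiniteDimensional (RatFunc Fq) (RatFunc Fq ⊗[Polynomial Fq] R) :=
    Module.Finite.of_basis bA
  refine ⟨?_, ?_, ?_⟩
  · -- division
    intro z hz
    have hinjL : Function.Injective (LinearMap.mulLeft (RatFunc Fq) z) := by
      intro a b hab
      simp only [LinearMap.mulLeft_apply] at hab
      have h0 : z * (a - b) = 0 := by rw [mul_sub, hab, sub_self]
      rcases hdom _ _ h0 with h1 | h1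
      · exact absurd h1 hz
      · exact sub_eq_zero.mp h1
    have hinjR : Function.Injective (LinearMap.mulRight (RatFunc Fq) z) := by
      intro a b hab
      simp only [LinearMap.mulRight_apply] at hab
      have h0 : (a - b) * z = 0 := by rw [sub_mul, hab, sub_self]
      rcases hdom _ _ h0 with h1 | h1
      · exact sub_eq_zero.mp h1
      · exact absurd h1 hz
    obtain ⟨w, hw⟩ := LinearMap.surjective_of_injective hinjL 1
    obtain ⟨v, hv⟩ := LinearMap.surjective_of_injective hinjR 1
    simp only [LinearMap.mulLeft_apply] at hw
    simp only [LinearMap.mulRight_apply] at hv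
    have hvw : v = w := by
      calc v = v * (z * w) := by rw [hw, mul_one]
        _ = (v * z) * w := by rw [mul_assoc]
        _ = w := by rw [hv, one_mul]
    exact ⟨⟨z, w, hw, by rw [← hvw]; exact hv⟩, rfl⟩
  · -- center
    ext z
    rw [Subring.mem_center_iff]
    constructor
    · intro hz
      obtain ⟨p, r, hp, e⟩ := exden z
      have hrcomm : ∀ y : R, r * y = y * r := by
        intro y
        apply inj2
        calc (1 : RatFunc Fq) ⊗ₜ[Polynomial Fq] (r * y)
            = ((1 : RatFunc Fq) ⊗ₜ[Polynomial Fq] r) * ((1 : RatFunc Fq) ⊗ₜ[Polynomial Fq] y) := by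
              rw [Algebra.TensorProduct.tmul_mul_tmul, one_mul]
          _ = (algebraMap (Polynomial Fq) (RatFunc Fq) p • z)
              * ((1 : RatFunc Fq) ⊗ₜ[Polynomial Fq] y) := by rw [e]
          _ = algebraMap (Polynomial Fq) (RatFunc Fq) p
              • (z * ((1 : RatFunc Fq) ⊗ₜ[Polynomial Fq] y)) := smul_mul_assoc _ _ _
          _ = algebraMap (Polynomial Fq) (RatFunc Fq) p
              • (((1 : RatFunc Fq) ⊗ₜ[Polynomial Fq] y) * z) := by
              rw [hz ((1 : RatFunc Fq) ⊗ₜ[Polynomial Fq] y)]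
          _ = ((1 : RatFunc Fq) ⊗ₜ[Polynomial Fq] y)
              * (algebraMap (Polynomial Fq) (RatFunc Fq) p • z) := (mul_smul_comm _ _ _).symm
          _ = ((1 : RatFunc Fq) ⊗ₜ[Polynomial Fq] y) * ((1 : RatFunc Fq) ⊗ₜ[Polynomial Fq] r) := by
              rw [e]
          _ = (1 : RatFunc Fq) ⊗ₜ[Polynomial Fq] (y * r) := by
              rw [Algebra.TensorProduct.tmul_mul_tmul, one_mul]
      obtain ⟨p', hp'⟩ := central_is_poly hq hd hK h hι halg r (hrcomm τ) (fun a => hrcomm (ι a))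
      have e2 : (1 : RatFunc Fq) ⊗ₜ[Polynomial Fq] r
          = algebraMap (RatFunc Fq) (RatFunc Fq ⊗[Polynomial Fq] R)
              (algebraMap (Polynomial Fq) (RatFunc Fq) p') := by
        rw [← hp']
        calc (1 : RatFunc Fq) ⊗ₜ[Polynomial Fq] (algebraMap (Polynomial Fq) R p')
            = (1 : RatFunc Fq) ⊗ₜ[Polynomial Fq] (p' • (1 : R)) := by
              rw [Algebra.algebraMap_eq_smul_one]
          _ = (p' • (1 : RatFunc Fq)) ⊗ₜ[Polynomial Fq] (1 : R) :=
              (TensorProduct.smul_tmul _ _ _).symm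
          _ = (algebraMap (Polynomial Fq) (RatFunc Fq) p') ⊗ₜ[Polynomial Fq] (1 : R) := by
              rw [Algebra.smul_def, mul_one]
          _ = _ := by simp [Algebra.TensorProduct.algebraMap_apply]
      refine ⟨algebraMap (Polynomial Fq) (RatFunc Fq) p'
        / algebraMap (Polynomial Fq) (RatFunc Fq) p, ?_⟩
      apply smul_right_injective (RatFunc Fq ⊗[Polynomial Fq] R) (algne _ hp)
      show algebraMap (Polynomial Fq) (RatFunc Fq) p •
        algebraMap (RatFunc Fq) _ _ = algebraMap (Polynomial Fq) (RatFunc Fq) p • z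
      have smul_eq : ∀ (f : RatFunc Fq) (y : RatFunc Fq ⊗[Polynomial Fq] R),
          f • y = algebraMap (RatFunc Fq) (RatFunc Fq ⊗[Polynomial Fq] R) f * y := by
        intro f y
        calc f • y = f • (1 * y) := by rw [one_mul]
          _ = (f • 1) * y := (smul_mul_assoc f 1 y).symm
          _ = _ := by rw [Algebra.algebraMap_eq_smul_one]
      rw [e, e2, smul_eq, ← map_mul]
      congr 1
      rw [mul_comm, div_mul_cancel₀ _ (algne _ hp)]
    · rintro ⟨f, rfl⟩ g
      induction g using TensorProduct.induction_on with
      | zero => rw [zero_mul, mul_zero]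
      | tmul g r =>
        rw [Algebra.TensorProduct.algebraMap_apply, Algebra.TensorProduct.tmul_mul_tmul,
          Algebra.TensorProduct.tmul_mul_tmul, mul_comm, one_mul, mul_one]
      | add a b ha hb => rw [add_mul, mul_add, ha, hb]
  · -- finrank
    rw [Module.finrank_eq_card_basis bA, Fintype.card_prod, Fintype.card_fin, sq]
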